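/- Any solution (a,b) ∈ C¹[0,T] of the system da/dt = (Pa/t)(b-1/P), db/dt = (P/(2t))(1-b²) - (PQ/2)(1-a²) - Qb with a not identically zero satisfies b(t) > 0 for all t ∈ [0,T], and in particular b(0) = 1. -/

import Mathlib

open Set Real Filter Topology

/-- Metric coefficient `P(t) = √6·√(2t²+2)/√(2t²+3)`. -/
noncomputable def Pfun (t : ℝ) : ℝ := Real.sqrt 6 * Real.sqrt (2 * t ^ 2 + 2) / Real.sqrt (2 * t ^ 2 + 3)

/-- Metric coefficient `Q(t) = t/(t²+1)`. -/
noncomputable def Qfun (t : ℝ) : ℝ := t / (t ^ 2 + 1)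

/-- `(a,b)` solves the invariant Spin(7) instanton system on the set `s`. -/
def SolvesSpin7 (a b : ℝ → ℝ) (s : Set ℝ) : Prop :=
  ∀ t ∈ s,
    HasDerivAt a (Pfun t * a t / t * (b t - 1 / Pfun t)) t ∧
    HasDerivAt b
      (Pfun t / (2 * t) * (1 - (b t) ^ 2) - Pfun t * Qfun t / 2 * (1 - (a t) ^ 2) - Qfun t * b t) t


lemma Pfun_eq (t : ℝ) : Pfun t = Real.sqrt ((12 * t ^ 2 + 12) / (2 * t ^ 2 + 3)) := by
  unfold Pfun
  rw [← Real.sqrt_mul (by norm_num : (0:ℝ) ≤ 6), ← Real.sqrt_div (by positivity)]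
  ring_nf

lemma Pfun_pos (t : ℝ) : 0 < Pfun t := by
  rw [Pfun_eq]; exact Real.sqrt_pos.mpr (by positivity)

lemma two_le_Pfun (t : ℝ) : 2 ≤ Pfun t := by
  rw [Pfun_eq]
  have h : (4:ℝ) ≤ (12 * t ^ 2 + 12) / (2 * t ^ 2 + 3) := by
    rw [le_div_iff₀ (by positivity)]; nlinarith [sq_nonneg t]
  calc (2:ℝ) = Real.sqrt 4 := by
        rw [show (4:ℝ) = 2 ^ 2 by norm_num, Real.sqrt_sq (by norm_num : (0:ℝ) ≤ 2)]
    _ ≤ _ := Real.sqrt_le_sqrt h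

lemma Pfun_le_three (t : ℝ) : Pfun t ≤ 3 := by
  rw [Pfun_eq]
  have h : (12 * t ^ 2 + 12) / (2 * t ^ 2 + 3) ≤ 9 := by
    rw [div_le_iff₀ (by positivity)]; nlinarith [sq_nonneg t]
  calc Real.sqrt ((12 * t ^ 2 + 12) / (2 * t ^ 2 + 3)) ≤ Real.sqrt 9 := Real.sqrt_le_sqrt h
    _ = 3 := by rw [show (9:ℝ) = 3 ^ 2 by norm_num, Real.sqrt_sq (by norm_num : (0:ℝ) ≤ 3)]

lemma Pfun_zero : Pfun 0 = 2 := by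
  rw [Pfun_eq]
  norm_num

lemma continuous_Pfun : Continuous Pfun := by
  unfold Pfun
  refine Continuous.div (continuous_const.mul (Real.continuous_sqrt.comp (by continuity)))
    (Real.continuous_sqrt.comp (by continuity)) ?_
  intro t
  exact (Real.sqrt_pos.mpr (by positivity)).ne'

lemma Qfun_nonneg {t : ℝ} (h : 0 ≤ t) : 0 ≤ Qfun t := div_nonneg h (by positivity)

lemma Qfun_le_one {t : ℝ} (h : 0 ≤ t) : Qfun t ≤ 1 := by
  rw [Qfun, div_le_one (by positivity)]; nlinarith [sq_nonneg (t - 1)]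

lemma mul_Qfun_lt_one (t : ℝ) : t * Qfun t < 1 := by
  rw [Qfun]
  rw [show t * (t / (t ^ 2 + 1)) = t ^ 2 / (t ^ 2 + 1) by ring]
  rw [div_lt_one (by positivity)]
  linarith


lemma spin7_aux_b0 (a b : ℝ → ℝ) (T : ℝ) (hT : 0 < T)
    (ha : ContDiffOn ℝ 1 a (Set.Icc 0 T)) (hb : ContDiffOn ℝ 1 b (Set.Icc 0 T))
    (hsol : SolvesSpin7 a b (Set.Ioc 0 T)) :
    b 0 = 1 ∨ b 0 = -1 := by
  have hUD : UniqueDiffOn ℝ (Icc (0:ℝ) T) := uniqueDiffOn_Icc hT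
  have h0T : (0:ℝ) ∈ Icc (0:ℝ) T := ⟨le_refl 0, hT.le⟩
  have hacont : ContinuousOn a (Icc 0 T) := ha.continuousOn
  have hbcont : ContinuousOn b (Icc 0 T) := hb.continuousOn
  obtain ⟨A, hA⟩ := (isCompact_Icc).exists_bound_of_continuousOn hacont
  obtain ⟨B, hB⟩ := (isCompact_Icc).exists_bound_of_continuousOn hbcont
  have hb' : ContinuousOn (derivWithin b (Icc 0 T)) (Icc 0 T) :=
    hb.continuousOn_derivWithin hUD le_rfl
  obtain ⟨C, hC⟩ := (isCompact_Icc).exists_bound_of_continuousOn hb'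
  have hbderiv : ∀ t ∈ Ioc (0:ℝ) T, derivWithin b (Icc 0 T) t =
      Pfun t / (2 * t) * (1 - (b t) ^ 2) - Pfun t * Qfun t / 2 * (1 - (a t) ^ 2) - Qfun t * b t :=
    fun t ht => ((hsol t ht).2.hasDerivWithinAt).derivWithin (hUD t ⟨ht.1.le, ht.2⟩)
  set K : ℝ := C + B + 3/2 * (1 + A ^ 2) with hK
  have key : ∀ t ∈ Ioc (0:ℝ) T, |1 - b t ^ 2| ≤ K * t := by
    intro t ht
    have htIcc : t ∈ Icc 0 T := ⟨ht.1.le, ht.2⟩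
    have ht0 : 0 < t := ht.1
    have hP := Pfun_pos t
    set d := derivWithin b (Icc 0 T) t with hdd
    have hdeq : d = Pfun t / (2*t) * (1 - b t ^ 2) - Pfun t * Qfun t / 2 * (1 - a t ^ 2)
        - Qfun t * b t := hbderiv t ht
    set E := d + Qfun t * b t + Pfun t * Qfun t / 2 * (1 - a t ^ 2) with hE
    have h2 : Pfun t / (2*t) * (1 - b t ^ 2) = E := by rw [hE, hdeq]; ring
    have h1 : 1 - b t ^ 2 = 2 * t / Pfun t * E := by
      rw [← h2]
      field_simp
    rw [h1, abs_mul]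
    have hfrac : |2 * t / Pfun t| ≤ t := by
      rw [abs_of_pos (by positivity)]
      rw [div_le_iff₀ hP]
      nlinarith [two_le_Pfun t]
    have hdabs : |d| ≤ C := by
      have := hC t htIcc; rwa [Real.norm_eq_abs] at this
    have h4 : |Qfun t * b t| ≤ B := by
      rw [abs_mul, abs_of_nonneg (Qfun_nonneg ht0.le)]
      have hb1 := hB t htIcc
      rw [Real.norm_eq_abs] at hb1
      nlinarith [Qfun_le_one ht0.le, Qfun_nonneg ht0.le, abs_nonneg (b t)]
    have h7 : |1 - a t ^ 2| ≤ 1 + A ^ 2 := by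
      have ha1 := hA t htIcc
      rw [Real.norm_eq_abs] at ha1
      have haa : a t ^ 2 ≤ A ^ 2 := by nlinarith [abs_nonneg (a t), sq_abs (a t)]
      rw [abs_le]
      constructor <;> nlinarith [sq_nonneg (a t)]
    have h5 : |Pfun t * Qfun t / 2 * (1 - a t ^ 2)| ≤ 3/2 * (1 + A ^ 2) := by
      rw [abs_mul]
      have h6 : |Pfun t * Qfun t / 2| ≤ 3/2 := by
        rw [abs_of_nonneg (div_nonneg (mul_nonneg hP.le (Qfun_nonneg ht0.le)) (by norm_num))]
        have h8 : Pfun t * Qfun t ≤ 3 * 1 :=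
          mul_le_mul (Pfun_le_three t) (Qfun_le_one ht0.le) (Qfun_nonneg ht0.le) (by norm_num)
        linarith
      exact mul_le_mul h6 h7 (abs_nonneg _) (by norm_num)
    have hEabs : |E| ≤ K := by
      have hstep : |E| ≤ |d| + |Qfun t * b t| + |Pfun t * Qfun t / 2 * (1 - a t ^ 2)| :=
        abs_add_three _ _ _
      rw [hK]; linarith
    have hfin : |2 * t / Pfun t| * |E| ≤ t * K :=
      mul_le_mul hfrac hEabs (abs_nonneg _) ht0.le
    linarith [hfin]
  haveI : (𝓝[Ioc (0:ℝ) T] (0:ℝ)).NeBot := by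
    rw [← mem_closure_iff_nhdsWithin_neBot, closure_Ioc hT.ne]
    exact h0T
  have hlim1 : Tendsto (fun t => 1 - b t ^ 2) (𝓝[Ioc (0:ℝ) T] 0) (𝓝 0) := by
    have hg : Tendsto (fun t : ℝ => K * t) (𝓝[Ioc (0:ℝ) T] 0) (𝓝 0) := by
      have h9 : Tendsto (fun t : ℝ => K * t) (𝓝 0) (𝓝 0) := by
        have h10 := ((continuous_const.mul continuous_id : Continuous (fun t : ℝ => K * t)).tendsto (0:ℝ))
        simpa using (continuous_mul_left K).tendsto (0:ℝ)
      exact h9.mono_left nhdsWithin_le_nhds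
    exact squeeze_zero_norm' (eventually_nhdsWithin_of_forall key) hg
  have hlim2 : Tendsto (fun t => 1 - b t ^ 2) (𝓝[Ioc (0:ℝ) T] 0) (𝓝 (1 - b 0 ^ 2)) := by
    have h := (hbcont 0 h0T).mono Ioc_subset_Icc_self
    exact tendsto_const_nhds.sub (h.pow 2)
  have hb01 : 1 - b 0 ^ 2 = 0 := tendsto_nhds_unique hlim2 hlim1
  have hmul : (b 0 - 1) * (b 0 + 1) = 0 := by nlinarith
  rcases mul_eq_zero.mp hmul with h | h
  · left; linarith
  · right; linarith

lemma spin7_aux_neg (a b : ℝ → ℝ) (T : ℝ) (hT : 0 < T)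
    (ha : ContDiffOn ℝ 1 a (Set.Icc 0 T)) (hb : ContDiffOn ℝ 1 b (Set.Icc 0 T))
    (hsol : SolvesSpin7 a b (Set.Ioc 0 T))
    (hanz : ∃ t ∈ Set.Icc (0 : ℝ) T, a t ≠ 0)
    (hb0 : b 0 = -1) : False := by
  have h0T : (0:ℝ) ∈ Icc (0:ℝ) T := ⟨le_refl 0, hT.le⟩
  have hacont : ContinuousOn a (Icc 0 T) := ha.continuousOn
  have hbcont : ContinuousOn b (Icc 0 T) := hb.continuousOn
  obtain ⟨B, hB⟩ := (isCompact_Icc).exists_bound_of_continuousOn hbcont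
  have hB0 : (0:ℝ) ≤ B := le_trans (norm_nonneg _) (hB 0 h0T)
  -- find δ with Pfun x * b x < -3/2 on Icc 0 T near 0
  have hPb : Tendsto (fun t => Pfun t * b t) (𝓝[Icc (0:ℝ) T] 0) (𝓝 (-2)) := by
    have h1 : ContinuousWithinAt (fun t => Pfun t * b t) (Icc 0 T) 0 :=
      (continuous_Pfun.continuousWithinAt).mul (hbcont 0 h0T)
    have h2 : Pfun 0 * b 0 = -2 := by rw [Pfun_zero, hb0]; norm_num
    rw [ContinuousWithinAt, h2] at h1
    exact h1
  have hev : ∀ᶠ x in 𝓝[Icc (0:ℝ) T] 0, Pfun x * b x < -3/2 :=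
    hPb.eventually_lt_const (by norm_num)
  rw [eventually_nhdsWithin_iff, Metric.eventually_nhds_iff] at hev
  obtain ⟨ε, hε, hevd⟩ := hev
  set δ : ℝ := min (ε/2) T with hδdef
  have hδpos : 0 < δ := lt_min (by linarith) hT
  have hδT : δ ≤ T := min_le_right _ _
  have hδsmall : ∀ x ∈ Icc (0:ℝ) T, x ≤ δ → Pfun x * b x < -3/2 := by
    intro x hx hxδ
    have hd : dist x 0 < ε := by
      rw [Real.dist_eq, sub_zero, abs_of_nonneg hx.1]
      have : δ ≤ ε/2 := min_le_left _ _
      linarith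
    exact hevd hd hx
  set M : ℝ := (6 + 6*B)/δ with hMdef
  have hM0 : 0 < M := div_pos (by linarith) hδpos
  -- the key factor bound
  have hfactor : ∀ x ∈ Ioo (0:ℝ) T, 4 + 2*(Pfun x * b x - 1) - M * x ≤ 0 := by
    intro x hx
    rcases le_or_gt x δ with hxδ | hxδ
    · have h1 := hδsmall x ⟨hx.1.le, hx.2.le⟩ hxδ
      nlinarith [mul_nonneg hM0.le hx.1.le]
    · have h1 : Pfun x * b x ≤ 3 * B := by
        have h2 : |Pfun x * b x| ≤ 3 * B := by
          rw [abs_mul, abs_of_pos (Pfun_pos x)]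
          have hbx := hB x ⟨hx.1.le, hx.2.le⟩
          rw [Real.norm_eq_abs] at hbx
          exact mul_le_mul (Pfun_le_three x) hbx (abs_nonneg _) (by norm_num)
        exact le_trans (le_abs_self _) h2
      have h3 : M * δ = 6 + 6 * B := by rw [hMdef]; field_simp
      have h4 : M * δ ≤ M * x := by nlinarith
      nlinarith
  -- h is antitone
  set h : ℝ → ℝ := fun t => t^4 * (a t)^2 * Real.exp (-M * t) with hhdef
  have hcont : ContinuousOn h (Icc 0 T) := by
    apply ContinuousOn.mul
    · exact (continuousOn_pow 4).mul (hacont.pow 2)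
    · exact (Real.continuous_exp.comp (continuous_const.mul continuous_id)).continuousOn
  have hderivval : ∀ x ∈ Ioo (0:ℝ) T, HasDerivAt h
      (Real.exp (-M*x) * (x^3 * (a x)^2 * (4 + 2*(Pfun x * b x - 1) - M * x))) x := by
    intro x hx
    have hx0 : 0 < x := hx.1
    have hP := Pfun_pos x
    have haD : HasDerivAt a (Pfun x * a x / x * (b x - 1/Pfun x)) x := (hsol x ⟨hx0, hx.2.le⟩).1
    have h1 : HasDerivAt (fun t : ℝ => t ^ 4) (4 * x ^ 3) x := by
      simpa using hasDerivAt_pow 4 x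
    have h2 : HasDerivAt (fun t => (a t) ^ 2)
        (2 * a x * (Pfun x * a x / x * (b x - 1/Pfun x))) x := by
      simpa using haD.fun_pow 2
    have h3 : HasDerivAt (fun t : ℝ => Real.exp (-M * t)) (Real.exp (-M*x) * (-M)) x := by
      have := ((hasDerivAt_id x).const_mul (-M)).exp
      simpa using this
    have hprod := (h1.fun_mul h2).fun_mul h3
    refine hprod.congr_deriv ?_
    field_simp
    ring
  have hAnti : AntitoneOn h (Icc 0 T) := by
    apply antitoneOn_of_deriv_nonpos (convex_Icc 0 T) hcont
    · intro x hx
      rw [interior_Icc] at hx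
      exact ((hderivval x hx).differentiableAt).differentiableWithinAt
    · intro x hx
      rw [interior_Icc] at hx
      rw [(hderivval x hx).deriv]
      have hf := hfactor x hx
      have hx0 : 0 < x := hx.1
      apply mul_nonpos_of_nonneg_of_nonpos (Real.exp_pos _).le
      apply mul_nonpos_of_nonneg_of_nonpos (by positivity) hf
  -- h ≤ 0 on Icc, hence a = 0 on Ioc 0 T
  have hzero : ∀ t ∈ Ioc (0:ℝ) T, a t = 0 := by
    intro t ht
    have h1 : h t ≤ h 0 := hAnti h0T ⟨ht.1.le, ht.2⟩ ht.1.le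
    have h2 : h 0 = 0 := by simp [hhdef]
    have h3 : 0 ≤ h t := by
      rw [hhdef]
      positivity
    have h4 : h t = 0 := le_antisymm (h2 ▸ h1) h3
    rw [hhdef] at h4
    simp only [mul_eq_zero] at h4
    rcases h4 with (h5 | h5) | h5
    · exact absurd h5 (pow_pos ht.1 4).ne'
    · exact pow_eq_zero_iff (by norm_num) |>.mp h5
    · exact absurd h5 (Real.exp_pos _).ne'
  -- a 0 = 0 by continuity
  haveI : (𝓝[Ioc (0:ℝ) T] (0:ℝ)).NeBot := by
    rw [← mem_closure_iff_nhdsWithin_neBot, closure_Ioc hT.ne]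
    exact h0T
  have ha0 : a 0 = 0 := by
    have h1 : Tendsto a (𝓝[Ioc (0:ℝ) T] 0) (𝓝 (a 0)) :=
      (hacont 0 h0T).mono Ioc_subset_Icc_self
    have h2 : Tendsto a (𝓝[Ioc (0:ℝ) T] 0) (𝓝 0) := by
      apply Tendsto.congr' _ tendsto_const_nhds
      exact eventually_nhdsWithin_of_forall (fun x hx => (hzero x hx).symm)
    exact tendsto_nhds_unique h1 h2
  obtain ⟨t, ht, hat⟩ := hanz
  rcases eq_or_lt_of_le ht.1 with h | h
  · exact hat (h ▸ ha0)
  · exact hat (hzero t ⟨h, ht.2⟩)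

lemma spin7_aux_pos (a b : ℝ → ℝ) (T : ℝ) (hT : 0 < T)
    (ha : ContDiffOn ℝ 1 a (Set.Icc 0 T)) (hb : ContDiffOn ℝ 1 b (Set.Icc 0 T))
    (hsol : SolvesSpin7 a b (Set.Ioc 0 T))
    (hb0 : b 0 = 1) : ∀ t ∈ Set.Icc (0:ℝ) T, 0 < b t := by
  have h0T : (0:ℝ) ∈ Icc (0:ℝ) T := ⟨le_refl 0, hT.le⟩
  have hbcont : ContinuousOn b (Icc 0 T) := hb.continuousOn
  by_contra hcon
  push_neg at hcon
  obtain ⟨t₁, ht₁, hbt₁⟩ := hcon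
  set S : Set ℝ := Icc 0 T ∩ b ⁻¹' Iic 0 with hSdef
  have hSclosed : IsClosed S := by
    apply ContinuousOn.preimage_isClosed_of_isClosed hbcont isClosed_Icc isClosed_Iic
  have hSne : S.Nonempty := ⟨t₁, ht₁, hbt₁⟩
  have hSbdd : BddBelow S := ⟨0, fun x hx => hx.1.1⟩
  set t₀ : ℝ := sInf S with ht₀def
  have ht₀S : t₀ ∈ S := hSclosed.csInf_mem hSne hSbdd
  have ht₀Icc : t₀ ∈ Icc (0:ℝ) T := ht₀S.1
  have hbt₀ : b t₀ ≤ 0 := ht₀S.2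
  have ht₀pos : 0 < t₀ := by
    rcases eq_or_lt_of_le ht₀Icc.1 with h | h
    · exfalso; rw [← h, hb0] at hbt₀; linarith
    · exact h
  have hlt : ∀ s : ℝ, 0 ≤ s → s < t₀ → 0 < b s := by
    intro s hs0 hst
    by_contra hbs
    push_neg at hbs
    have : s ∈ S := ⟨⟨hs0, hst.le.trans ht₀Icc.2⟩, hbs⟩
    exact absurd (csInf_le hSbdd this) (not_le.mpr hst)
  have hbt₀0 : b t₀ = 0 := by
    refine le_antisymm hbt₀ ?_
    have hIco : Ico (0:ℝ) t₀ ⊆ Icc 0 T := fun x hx => ⟨hx.1, hx.2.le.trans ht₀Icc.2⟩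
    have h1 : Tendsto b (𝓝[Ico (0:ℝ) t₀] t₀) (𝓝 (b t₀)) :=
      (hbcont t₀ ht₀Icc).mono hIco
    haveI : (𝓝[Ico (0:ℝ) t₀] t₀).NeBot := by
      rw [← mem_closure_iff_nhdsWithin_neBot, closure_Ico ht₀pos.ne]
      exact ⟨ht₀pos.le, le_refl _⟩
    refine ge_of_tendsto h1 ?_
    exact eventually_nhdsWithin_of_forall (fun x hx => (hlt x hx.1 hx.2).le)
  -- derivative at t₀
  set d : ℝ := Pfun t₀ / (2 * t₀) * (1 - (b t₀) ^ 2) - Pfun t₀ * Qfun t₀ / 2 * (1 - (a t₀) ^ 2)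
      - Qfun t₀ * b t₀ with hddef
  have hd : HasDerivAt b d t₀ := (hsol t₀ ⟨ht₀pos, ht₀Icc.2⟩).2
  have hdpos : 0 < d := by
    rw [hddef, hbt₀0]
    have hP := Pfun_pos t₀
    have hQ := Qfun_nonneg ht₀pos.le
    have htQ := mul_Qfun_lt_one t₀
    have h1 : Pfun t₀ * Qfun t₀ / 2 * (1 - (a t₀) ^ 2) ≤ Pfun t₀ * Qfun t₀ / 2 := by
      nlinarith [sq_nonneg (a t₀), mul_nonneg hP.le hQ]
    have h2 : Pfun t₀ * Qfun t₀ / 2 < Pfun t₀ / (2 * t₀) := by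
      rw [div_lt_div_iff₀ (by norm_num) (by positivity)]
      nlinarith
    simp only [mul_zero, sub_zero]
    nlinarith
  -- left slope nonpositive
  have hW : HasDerivWithinAt b d (Iio t₀) t₀ := hd.hasDerivWithinAt
  rw [hasDerivWithinAt_iff_tendsto_slope] at hW
  have hsub : Iio t₀ \ {t₀} = Iio t₀ := diff_singleton_eq_self (by simp)
  rw [hsub] at hW
  haveI : (𝓝[Iio t₀] t₀).NeBot := nhdsLT_neBot t₀
  have hev : ∀ᶠ s in 𝓝[Iio t₀] t₀, slope b t₀ s ≤ 0 := by
    filter_upwards [Ioo_mem_nhdsLT_of_mem (⟨ht₀pos, le_refl t₀⟩ : t₀ ∈ Ioc 0 t₀)] with s hs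
    have hbs : 0 < b s := hlt s hs.1.le hs.2

    obtain ⟨hs1, hs2⟩ := hs
    rw [slope_def_field, hbt₀0]
    apply div_nonpos_of_nonneg_of_nonpos <;> linarith
  have : d ≤ 0 := le_of_tendsto hW hev
  linarith

/-- A `C¹` solution `(a,b)` on `[0,T]` of the invariant Spin(7) instanton system with `a` not
identically zero satisfies `b > 0` on `[0,T]`, and in particular `b(0) = 1`. -/
theorem spin7_b_positive (a b : ℝ → ℝ) (T : ℝ) (hT : 0 < T)
    (ha : ContDiffOn ℝ 1 a (Set.Icc 0 T)) (hb : ContDiffOn ℝ 1 b (Set.Icc 0 T))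
    (hsol : SolvesSpin7 a b (Set.Ioc 0 T))
    (hanz : ∃ t ∈ Set.Icc (0 : ℝ) T, a t ≠ 0) :
    (∀ t ∈ Set.Icc (0 : ℝ) T, 0 < b t) ∧ b 0 = 1 := by
  rcases spin7_aux_b0 a b T hT ha hb hsol with hb0 | hb0
  · exact ⟨spin7_aux_pos a b T hT ha hb hsol hb0, hb0⟩
  · exact absurd (spin7_aux_neg a b T hT ha hb hsol hanz hb0) (fun h => h)
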